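/- arXiv:2212.12593 — 2 statements merged into one kernel-verified Lean document; each statement's English description precedes it below -/
import Mathlib

section
/- Let a < b be real numbers and let w : [a,b] → ℝ be continuously differentiable with w(a) = w(b) = 0. Then for every λ ≥ 1, ∫_a^b (w'(z))² e^{2λz} dz ≥ (λ²/2) ∫_a^b (w(z))² e^{2λz} dz. -/
open Set intervalIntegral

theorem stmt_6 (a b : ℝ) (hab : a < b) (w w' : ℝ → ℝ)
    (hderiv : ∀ z ∈ Icc a b, HasDerivAt w (w' z) z)
    (hw'cont : ContinuousOn w' (Icc a b))
    (hwa : w a = 0) (hwb : w b = 0) :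
    ∀ l : ℝ, 1 ≤ l →
      (∫ z in a..b, (w' z) ^ 2 * Real.exp (2 * l * z)) ≥
        (l ^ 2 / 2) * ∫ z in a..b, (w z) ^ 2 * Real.exp (2 * l * z) := by
  intro l hl
  have hab' : a ≤ b := hab.le
  have huIcc : uIcc a b = Icc a b := uIcc_of_le hab'
  set E : ℝ → ℝ := fun z => Real.exp (2 * l * z) with hE
  have hwcont : ContinuousOn w (Icc a b) := fun z hz =>
    (hderiv z hz).continuousAt.continuousWithinAt
  have hEcont : Continuous E := by continuity
  have hi1 : IntervalIntegrable (fun z => (w' z)^2 * E z) MeasureTheory.volume a b := by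
    apply ContinuousOn.intervalIntegrable
    rw [huIcc]
    exact (hw'cont.pow 2).mul hEcont.continuousOn
  have hi2 : IntervalIntegrable (fun z => (w z)^2 * E z) MeasureTheory.volume a b := by
    apply ContinuousOn.intervalIntegrable
    rw [huIcc]
    exact (hwcont.pow 2).mul hEcont.continuousOn
  have hi3 : IntervalIntegrable (fun z => w z * w' z * E z) MeasureTheory.volume a b := by
    apply ContinuousOn.intervalIntegrable
    rw [huIcc]
    exact (hwcont.mul hw'cont).mul hEcont.continuousOn
  have hftc : (∫ z in a..b, (2 * (w z * w' z) + 2 * l * (w z)^2) * E z) = 0 := by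
    have hd : ∀ z ∈ uIcc a b, HasDerivAt (fun z => (w z)^2 * E z)
        ((2 * (w z * w' z) + 2 * l * (w z)^2) * E z) z := by
      intro z hz
      rw [huIcc] at hz
      have h1 : HasDerivAt (fun z => (w z)^2) (2 * w z * w' z) z := by
        have := (hderiv z hz).fun_pow 2
        simpa [mul_comm, mul_assoc, mul_left_comm] using this
      have h2 : HasDerivAt E (2 * l * E z) z := by
        have := ((hasDerivAt_id z).const_mul (2*l)).exp
        simpa [hE, mul_comm] using this
      have : HasDerivAt (fun z => (w z)^2 * E z)
          (2 * w z * w' z * E z + w z ^ 2 * (2 * l * E z)) z := h1.fun_mul h2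
      convert this using 1
      ring
    have hcont : ContinuousOn (fun z => (2 * (w z * w' z) + 2 * l * (w z)^2) * E z)
        (uIcc a b) := by
      rw [huIcc]
      exact ((continuousOn_const.mul (hwcont.mul hw'cont)).add
        (continuousOn_const.mul (hwcont.pow 2))).mul hEcont.continuousOn
    rw [intervalIntegral.integral_eq_sub_of_hasDerivAt hd hcont.intervalIntegrable]
    simp [hwa, hwb]
  have hcross : (∫ z in a..b, w z * w' z * E z) = -l * ∫ z in a..b, (w z)^2 * E z := by
    have hsplit : (∫ z in a..b, (2 * (w z * w' z) + 2 * l * (w z)^2) * E z)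
        = 2 * (∫ z in a..b, w z * w' z * E z) + 2 * l * ∫ z in a..b, (w z)^2 * E z := by
      rw [← intervalIntegral.integral_const_mul, ← intervalIntegral.integral_const_mul,
        ← intervalIntegral.integral_add (hi3.const_mul 2) (hi2.const_mul (2*l))]
      congr 1; ext z; ring
    rw [hsplit] at hftc
    linarith
  have hsq : 0 ≤ ∫ z in a..b, (w' z + l * w z)^2 * E z := by
    apply intervalIntegral.integral_nonneg hab'
    intro z _
    positivity
  have hexp : (∫ z in a..b, (w' z + l * w z)^2 * E z)
      = (∫ z in a..b, (w' z)^2 * E z) + 2 * l * (∫ z in a..b, w z * w' z * E z)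
        + l^2 * ∫ z in a..b, (w z)^2 * E z := by
    rw [← intervalIntegral.integral_const_mul, ← intervalIntegral.integral_const_mul,
      ← intervalIntegral.integral_add hi1 (hi3.const_mul (2*l)),
      ← intervalIntegral.integral_add (hi1.add (hi3.const_mul (2*l))) (hi2.const_mul (l^2))]
    congr 1; ext z; ring
  rw [hexp, hcross] at hsq
  have hI2 : 0 ≤ ∫ z in a..b, (w z)^2 * E z := by
    apply intervalIntegral.integral_nonneg hab'
    intro z _; positivity
  nlinarith [sq_nonneg l]
end

section
/- Let a < b and let w : [a,b] → ℝ be continuously differentiable with w(a) = w(b) = 0. Then for all λ ≥ 1, ∫_a^b (w'(z))² e^{2λz} dz ≥ (1/4) ∫_a^b (w'(z))² e^{2λz} dz + (λ²/8) ∫_a^b (w(z))² e^{2λz} dz. -/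
open Set intervalIntegral

theorem stmt_7 (a b : ℝ) (hab : a < b) (w w' : ℝ → ℝ)
    (hderiv : ∀ z ∈ Icc a b, HasDerivAt w (w' z) z)
    (hw'cont : ContinuousOn w' (Icc a b))
    (hwa : w a = 0) (hwb : w b = 0) :
    ∀ l : ℝ, 1 ≤ l →
      (∫ z in a..b, (w' z) ^ 2 * Real.exp (2 * l * z)) ≥
        (1 / 4) * (∫ z in a..b, (w' z) ^ 2 * Real.exp (2 * l * z)) +
        (l ^ 2 / 8) * ∫ z in a..b, (w z) ^ 2 * Real.exp (2 * l * z) := by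
  intro l hl
  have hab' : a ≤ b := hab.le
  have huIcc : uIcc a b = Icc a b := uIcc_of_le hab'
  have hwc : ContinuousOn w (Icc a b) := fun z hz =>
    (hderiv z hz).continuousAt.continuousWithinAt
  have hec : Continuous (fun z : ℝ => Real.exp (2 * l * z)) := by continuity
  have hI : IntervalIntegrable (fun z => (w' z) ^ 2 * Real.exp (2 * l * z)) MeasureTheory.volume a b := by
    apply ContinuousOn.intervalIntegrable
    rw [huIcc]
    exact (hw'cont.pow 2).mul hec.continuousOn
  have hJ : IntervalIntegrable (fun z => (w z) ^ 2 * Real.exp (2 * l * z)) MeasureTheory.volume a b := by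
    apply ContinuousOn.intervalIntegrable
    rw [huIcc]
    exact (hwc.pow 2).mul hec.continuousOn
  have hK : IntervalIntegrable (fun z => (w z * w' z) * Real.exp (2 * l * z)) MeasureTheory.volume a b := by
    apply ContinuousOn.intervalIntegrable
    rw [huIcc]
    exact ((hwc.mul hw'cont).mul hec.continuousOn)
  -- integration by parts: derivative of w² e^{2lz}
  have hF : ∀ z ∈ uIcc a b, HasDerivAt (fun z => (w z) ^ 2 * Real.exp (2 * l * z))
      ((2 * (w z * w' z) + 2 * l * (w z) ^ 2) * Real.exp (2 * l * z)) z := by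
    intro z hz
    rw [huIcc] at hz
    have h1 : HasDerivAt (fun z => (w z) ^ 2) (2 * w z * w' z) z := by
      have := (hderiv z hz).fun_pow 2
      simpa using this
    have h2 : HasDerivAt (fun z : ℝ => Real.exp (2 * l * z))
        (Real.exp (2 * l * z) * (2 * l)) z := by
      have h3 : HasDerivAt (fun z : ℝ => 2 * l * z) (2 * l) z := by
        simpa using (hasDerivAt_id z).const_mul (2 * l)
      exact h3.exp
    have := h1.fun_mul h2
    exact this.congr_deriv (by ring)
  have hFint : IntervalIntegrable
      (fun z => (2 * (w z * w' z) + 2 * l * (w z) ^ 2) * Real.exp (2 * l * z))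
      MeasureTheory.volume a b := by
    apply ContinuousOn.intervalIntegrable
    rw [huIcc]
    exact ((continuousOn_const.mul (hwc.mul hw'cont)).add (continuousOn_const.mul (hwc.pow 2))).mul
      hec.continuousOn
  have key : (∫ z in a..b, (2 * (w z * w' z) + 2 * l * (w z) ^ 2) * Real.exp (2 * l * z)) = 0 := by
    rw [intervalIntegral.integral_eq_sub_of_hasDerivAt hF hFint, hwa, hwb]
    ring
  have split : (∫ z in a..b, (2 * (w z * w' z) + 2 * l * (w z) ^ 2) * Real.exp (2 * l * z)) =
      2 * (∫ z in a..b, (w z * w' z) * Real.exp (2 * l * z)) +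
      2 * l * (∫ z in a..b, (w z) ^ 2 * Real.exp (2 * l * z)) := by
    rw [← intervalIntegral.integral_const_mul, ← intervalIntegral.integral_const_mul,
      ← intervalIntegral.integral_add (hK.const_mul 2) (hJ.const_mul (2 * l))]
    congr 1
    ext z
    ring
  have hKval : (∫ z in a..b, (w z * w' z) * Real.exp (2 * l * z)) =
      -l * (∫ z in a..b, (w z) ^ 2 * Real.exp (2 * l * z)) := by
    have := key
    rw [split] at this
    linarith
  -- nonnegativity of ∫ (w' + l w)² e
  have hpos : 0 ≤ ∫ z in a..b, (w' z + l * w z) ^ 2 * Real.exp (2 * l * z) :=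
    intervalIntegral.integral_nonneg hab'
      (fun z _ => mul_nonneg (sq_nonneg _) (Real.exp_pos _).le)
  have hexpand : (∫ z in a..b, (w' z + l * w z) ^ 2 * Real.exp (2 * l * z)) =
      (∫ z in a..b, (w' z) ^ 2 * Real.exp (2 * l * z)) +
      2 * l * (∫ z in a..b, (w z * w' z) * Real.exp (2 * l * z)) +
      l ^ 2 * (∫ z in a..b, (w z) ^ 2 * Real.exp (2 * l * z)) := by
    rw [← intervalIntegral.integral_const_mul, ← intervalIntegral.integral_const_mul,
      ← intervalIntegral.integral_add hI (hK.const_mul (2 * l)),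
      ← intervalIntegral.integral_add (hI.add (hK.const_mul (2 * l))) (hJ.const_mul (l ^ 2))]
    congr 1
    ext z
    ring
  have hJnn : 0 ≤ ∫ z in a..b, (w z) ^ 2 * Real.exp (2 * l * z) :=
    intervalIntegral.integral_nonneg hab'
      (fun z _ => mul_nonneg (sq_nonneg _) (Real.exp_pos _).le)
  rw [hexpand, hKval] at hpos
  set I := ∫ z in a..b, (w' z) ^ 2 * Real.exp (2 * l * z)
  set J := ∫ z in a..b, (w z) ^ 2 * Real.exp (2 * l * z)
  -- hpos : 0 ≤ I - l² J
  nlinarith [sq_nonneg l, mul_nonneg (sq_nonneg l) hJnn]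
end
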